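/- Let L, b > 0. For γ ∈ (0, π/2), set R₀(γ) = L/sin γ and R₁(γ) = L/sin γ + b, and for each integer m ≥ 1 define E_m(γ) = −(cos²(mγ)·sin γ/(32π²·sin⁴(mγ))) · (1/(R₀(γ)²·cos γ) − 1/(R₁(γ)²·cos((m−1)γ)·cos(mγ))) if mγ < π/2, and E_m(γ) = 0 if mγ ≥ π/2. Then the sum Σ_{m=1}^{∞} E_m(γ) (a finite sum for each γ) tends to −π²·b/(1440·L³) as γ tends to 0 from the right. -/

import Mathlib

open Real Filter Topology

/-- The closed `2m`-bounce contribution `E_m(γ)` to the optical-approximation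
Casimir energy between a finite plate of length `b` and an infinite plane
meeting it at opening angle `γ`, with fixed minimum separation `L`, where
`R₀(γ) = L/sin γ` and `R₁(γ) = L/sin γ + b`; it is declared to vanish when
`mγ ≥ π/2` (no closed `2m`-bounce path exists then). -/
noncomputable def casimirTerm (L b : ℝ) (m : ℕ) (γ : ℝ) : ℝ :=
  if (m : ℝ) * γ < π / 2 then
    -(Real.cos ((m : ℝ) * γ) ^ 2 * Real.sin γ / (32 * π ^ 2 * Real.sin ((m : ℝ) * γ) ^ 4)) *
      (1 / ((L / Real.sin γ) ^ 2 * Real.cos γ) -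
        1 / ((L / Real.sin γ + b) ^ 2 * Real.cos (((m : ℝ) - 1) * γ) * Real.cos ((m : ℝ) * γ)))
  else 0

set_option maxHeartbeats 1000000

lemma sin_div_self_tendsto' :
    Tendsto (fun x : ℝ => Real.sin x / x) (𝓝[≠] (0:ℝ)) (𝓝 1) := by
  have h := hasDerivAt_iff_tendsto_slope.mp (Real.hasDerivAt_sin 0)
  have heq : slope Real.sin 0 = fun x => Real.sin x / x := by
    funext x; rw [slope_def_field]; simp
  rwa [heq, Real.cos_zero] at h
lemma casimir_rep (L b : ℝ) (hL : 0 < L) (hb : 0 < b) (m : ℕ) (γ : ℝ) (hγ : 0 < γ)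
    (h : ((m : ℝ) + 1) * γ < π / 2) :
    casimirTerm L b (m + 1) γ =
      -(Real.cos (((m : ℝ) + 1) * γ) ^ 2 * Real.sin γ ^ 3 *
        ((L + b * Real.sin γ) ^ 2 * Real.cos ((m : ℝ) * γ) * Real.cos (((m : ℝ) + 1) * γ)
          - L ^ 2 * Real.cos γ)) /
      (32 * π ^ 2 * Real.sin (((m : ℝ) + 1) * γ) ^ 4 *
        (L ^ 2 * Real.cos γ * (L + b * Real.sin γ) ^ 2 * Real.cos ((m : ℝ) * γ) *
          Real.cos (((m : ℝ) + 1) * γ))) := by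
  have hπ := Real.pi_pos
  have hM1 : (1:ℝ) ≤ (m : ℝ) + 1 := by have := Nat.cast_nonneg (α := ℝ) m; linarith
  have hγ2 : γ < π / 2 := lt_of_le_of_lt (by nlinarith) h
  have hs1 : 0 < Real.sin γ := Real.sin_pos_of_pos_of_lt_pi hγ (by linarith)
  have hcγ : 0 < Real.cos γ := Real.cos_pos_of_mem_Ioo ⟨by linarith, hγ2⟩
  have hMγ : 0 < ((m : ℝ) + 1) * γ := by nlinarith
  have hsM : 0 < Real.sin (((m : ℝ) + 1) * γ) :=
    Real.sin_pos_of_pos_of_lt_pi hMγ (by linarith)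
  have hc2 : 0 < Real.cos (((m : ℝ) + 1) * γ) := Real.cos_pos_of_mem_Ioo ⟨by linarith, h⟩
  have hm0 : (0:ℝ) ≤ (m : ℝ) * γ := mul_nonneg (Nat.cast_nonneg m) hγ.le
  have hc1 : 0 < Real.cos ((m : ℝ) * γ) := by
    refine Real.cos_pos_of_mem_Ioo ⟨by linarith, ?_⟩
    nlinarith
  have hLb : 0 < L + b * Real.sin γ := by positivity
  rw [casimirTerm]
  rw [if_pos (by push_cast; exact h)]
  push_cast
  have hRb : L / Real.sin γ + b = (L + b * Real.sin γ) / Real.sin γ := by field_simp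
  have h1 : ((m:ℝ) + 1 - 1) = (m:ℝ) := by ring
  rw [hRb, h1]
  field_simp
lemma bound_core (L b M γ c2 c1 sM sm s1 cγ : ℝ)
    (hL : 0 < L) (hb : 0 < b) (hγ0 : 0 < γ) (hγ1 : γ ≤ 1)
    (hM1 : 1 ≤ M)
    (hs1 : 0 < s1) (hs1γ : s1 ≤ γ)
    (hcγ : 0 < cγ) (hcγhalf : 1 / 2 ≤ cγ)
    (hsM : 0 < sM) (hjordan : 2 / π * (M * γ) ≤ sM)
    (hc2 : 0 < c2) (hc1 : 0 < c1) (hc2le1 : c2 ≤ c1) (hc2one : c2 ≤ 1)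
    (hsmle : sm ≤ sM) (hsm0 : 0 ≤ sm)
    (hNid : (L + b * s1) ^ 2 * c1 * c2 - L ^ 2 * cγ
      = -((L + b * s1) ^ 2 * sM * sm) + cγ * (b * s1) * (2 * L + b * s1)) :
    |-(c2 ^ 2 * s1 ^ 3 * ((L + b * s1) ^ 2 * c1 * c2 - L ^ 2 * cγ)) /
      (32 * π ^ 2 * sM ^ 4 * (L ^ 2 * cγ * (L + b * s1) ^ 2 * c1 * c2))|
      ≤ (1 / (64 * L ^ 2) + b * (2 * L + b) * π ^ 2 / (512 * L ^ 4)) * (1 / M ^ 2) := by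
  have hπ := Real.pi_pos
  have hM0 : (0:ℝ) < M := by linarith
  have hLb : 0 < L + b * s1 := by positivity
  have hLb2 : L ^ 2 ≤ (L + b * s1) ^ 2 := by nlinarith [mul_pos hb hs1]
  have hs1one : s1 ≤ 1 := by linarith
  set P := L + b * s1 with hP
  clear_value P
  have hDpos : 0 < 32 * π ^ 2 * sM ^ 4 * (L ^ 2 * cγ * P ^ 2 * c1 * c2) := by positivity
  have habsN : |P ^ 2 * c1 * c2 - L ^ 2 * cγ|
      ≤ P ^ 2 * sM * sm + cγ * (b * s1) * (2 * L + b * s1) := by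
    rw [hNid]
    refine (abs_add_le _ _).trans ?_
    rw [abs_neg, abs_of_nonneg (by positivity), abs_of_nonneg (by positivity)]
  have habs : |-(c2 ^ 2 * s1 ^ 3 * (P ^ 2 * c1 * c2 - L ^ 2 * cγ)) /
      (32 * π ^ 2 * sM ^ 4 * (L ^ 2 * cγ * P ^ 2 * c1 * c2))|
      = c2 ^ 2 * s1 ^ 3 * |P ^ 2 * c1 * c2 - L ^ 2 * cγ| /
        (32 * π ^ 2 * sM ^ 4 * (L ^ 2 * cγ * P ^ 2 * c1 * c2)) := by
    rw [abs_div, abs_neg, abs_of_pos hDpos, abs_mul, abs_mul,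
      abs_of_nonneg (by positivity : (0:ℝ) ≤ c2 ^ 2),
      abs_of_nonneg (by positivity : (0:ℝ) ≤ s1 ^ 3)]
  rw [habs, div_le_iff₀ hDpos]
  -- key scalar bounds
  have hMγ : 0 < M * γ := mul_pos hM0 hγ0
  have k1 : M ^ 2 * s1 ^ 3 ≤ π ^ 2 / 2 * (sM ^ 2 * cγ) := by
    have hj2 : (2 / π * (M * γ)) ^ 2 ≤ sM ^ 2 := by
      have h0 : 0 ≤ 2 / π * (M * γ) := by positivity
      nlinarith
    have he : (2 / π * (M * γ)) ^ 2 = 4 / π ^ 2 * (M ^ 2 * γ ^ 2) := by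
      field_simp; ring
    rw [he] at hj2
    have hs3 : s1 ^ 3 ≤ γ ^ 2 :=
      le_trans (pow_le_pow_left₀ hs1.le hs1γ 3) (pow_le_pow_of_le_one hγ0.le hγ1 (by norm_num))
    calc M ^ 2 * s1 ^ 3 ≤ M ^ 2 * γ ^ 2 := by
          exact mul_le_mul_of_nonneg_left hs3 (by positivity)
      _ = π ^ 2 / 2 * (4 / π ^ 2 * (M ^ 2 * γ ^ 2) * (1 / 2)) := by field_simp; ring
      _ ≤ π ^ 2 / 2 * (sM ^ 2 * cγ) := by
          refine mul_le_mul_of_nonneg_left ?_ (by positivity)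
          exact mul_le_mul hj2 hcγhalf (by norm_num) (by positivity)
  have k2 : M ^ 2 * s1 ^ 4 ≤ π ^ 4 / 16 * sM ^ 4 := by
    have hj4 : (2 / π * (M * γ)) ^ 4 ≤ sM ^ 4 :=
      pow_le_pow_left₀ (by positivity) hjordan 4
    have he : (2 / π * (M * γ)) ^ 4 = 16 / π ^ 4 * (M ^ 4 * γ ^ 4) := by
      field_simp; ring
    rw [he] at hj4
    have hs4 : s1 ^ 4 ≤ γ ^ 4 := pow_le_pow_left₀ hs1.le hs1γ 4
    have hM24 : M ^ 2 ≤ M ^ 4 := pow_le_pow_right₀ hM1 (by norm_num)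
    calc M ^ 2 * s1 ^ 4 ≤ M ^ 4 * γ ^ 4 := by
          exact mul_le_mul hM24 hs4 (by positivity) (by positivity)
      _ = π ^ 4 / 16 * (16 / π ^ 4 * (M ^ 4 * γ ^ 4)) := by field_simp
      _ ≤ π ^ 4 / 16 * sM ^ 4 := by
          exact mul_le_mul_of_nonneg_left hj4 (by positivity)
  have goal1 : c2 ^ 2 * s1 ^ 3 * (P ^ 2 * sM * sm) * M ^ 2
      ≤ π ^ 2 / 2 * (sM ^ 4 * (cγ * P ^ 2 * c1 * c2)) := by
    calc c2 ^ 2 * s1 ^ 3 * (P ^ 2 * sM * sm) * M ^ 2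
        = (c2 * sm * (M ^ 2 * s1 ^ 3)) * (c2 * sM * P ^ 2) := by ring
      _ ≤ (c1 * sM * (π ^ 2 / 2 * (sM ^ 2 * cγ))) * (c2 * sM * P ^ 2) := by
          have h1 : c2 * sm * (M ^ 2 * s1 ^ 3) ≤ c1 * sM * (π ^ 2 / 2 * (sM ^ 2 * cγ)) :=
            mul_le_mul (mul_le_mul hc2le1 hsmle hsm0 hc1.le) k1 (by positivity) (by positivity)
          exact mul_le_mul_of_nonneg_right h1 (by positivity)
      _ = π ^ 2 / 2 * (sM ^ 4 * (cγ * P ^ 2 * c1 * c2)) := by ring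
  have goal2 : c2 ^ 2 * s1 ^ 3 * (cγ * (b * s1) * (2 * L + b * s1)) * M ^ 2
      ≤ b * (2 * L + b) * π ^ 4 / (16 * L ^ 2) * (sM ^ 4 * (cγ * P ^ 2 * c1 * c2)) := by
    calc c2 ^ 2 * s1 ^ 3 * (cγ * (b * s1) * (2 * L + b * s1)) * M ^ 2
        = (c2 * (b * (2 * L + b * s1)) * (M ^ 2 * s1 ^ 4)) * (cγ * c2) := by ring
      _ ≤ (c1 * (b * (2 * L + b)) * (π ^ 4 / 16 * sM ^ 4)) * (cγ * c2) := by
          have h1 : c2 * (b * (2 * L + b * s1)) ≤ c1 * (b * (2 * L + b)) :=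
            mul_le_mul hc2le1 (by nlinarith [mul_le_mul_of_nonneg_left hs1one (by positivity : (0:ℝ) ≤ b * b)]) (by positivity) hc1.le
          exact mul_le_mul_of_nonneg_right
            (mul_le_mul h1 k2 (by positivity) (by positivity)) (by positivity)
      _ = b * (2 * L + b) * π ^ 4 / (16 * L ^ 2) * (sM ^ 4 * (cγ * (L ^ 2) * c1 * c2)) := by
          field_simp
      _ ≤ b * (2 * L + b) * π ^ 4 / (16 * L ^ 2) * (sM ^ 4 * (cγ * P ^ 2 * c1 * c2)) := by
          gcongr
  -- combine
  have hM2 : (0:ℝ) < M ^ 2 := by positivity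
  rw [← mul_le_mul_iff_of_pos_right hM2]
  calc c2 ^ 2 * s1 ^ 3 * |P ^ 2 * c1 * c2 - L ^ 2 * cγ| * M ^ 2
      ≤ c2 ^ 2 * s1 ^ 3 * (P ^ 2 * sM * sm + cγ * (b * s1) * (2 * L + b * s1)) * M ^ 2 := by
        gcongr
    _ = c2 ^ 2 * s1 ^ 3 * (P ^ 2 * sM * sm) * M ^ 2
        + c2 ^ 2 * s1 ^ 3 * (cγ * (b * s1) * (2 * L + b * s1)) * M ^ 2 := by ring
    _ ≤ π ^ 2 / 2 * (sM ^ 4 * (cγ * P ^ 2 * c1 * c2))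
        + b * (2 * L + b) * π ^ 4 / (16 * L ^ 2) * (sM ^ 4 * (cγ * P ^ 2 * c1 * c2)) :=
        add_le_add goal1 goal2
    _ = (1 / (64 * L ^ 2) + b * (2 * L + b) * π ^ 2 / (512 * L ^ 4)) * (1 / M ^ 2) *
        (32 * π ^ 2 * sM ^ 4 * (L ^ 2 * cγ * P ^ 2 * c1 * c2)) * M ^ 2 := by
        field_simp
        ring
lemma casimir_bound (L b : ℝ) (hL : 0 < L) (hb : 0 < b) (γ : ℝ) (hγ0 : 0 < γ) (hγ1 : γ ≤ 1)
    (m : ℕ) :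
    |casimirTerm L b (m + 1) γ| ≤
      (1 / (64 * L ^ 2) + b * (2 * L + b) * π ^ 2 / (512 * L ^ 4)) * (1 / ((m : ℝ) + 1) ^ 2) := by
  have hπ := Real.pi_pos
  have hm0 : (0:ℝ) ≤ (m : ℝ) := Nat.cast_nonneg m
  by_cases h : ((m : ℝ) + 1) * γ < π / 2
  case neg =>
    rw [casimirTerm, if_neg (by push_cast; exact h), abs_zero]
    positivity
  have hM1 : (1:ℝ) ≤ (m : ℝ) + 1 := by linarith
  have hM0 : (0:ℝ) < (m : ℝ) + 1 := by linarith
  have hMγ : 0 < ((m : ℝ) + 1) * γ := mul_pos hM0 hγ0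
  have hγ2 : γ < π / 2 := by nlinarith
  have hs1 : 0 < Real.sin γ := Real.sin_pos_of_pos_of_lt_pi hγ0 (by linarith)
  have hs1γ : Real.sin γ ≤ γ := Real.sin_le hγ0.le
  have hcγ : 0 < Real.cos γ := Real.cos_pos_of_mem_Ioo ⟨by linarith, hγ2⟩
  have hcγhalf : (1:ℝ) / 2 ≤ Real.cos γ := by
    have := Real.one_sub_sq_div_two_le_cos (x := γ)
    nlinarith
  have hsM : 0 < Real.sin (((m : ℝ) + 1) * γ) :=
    Real.sin_pos_of_pos_of_lt_pi hMγ (by linarith)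
  have hjordan : 2 / π * (((m : ℝ) + 1) * γ) ≤ Real.sin (((m : ℝ) + 1) * γ) :=
    Real.mul_le_sin hMγ.le h.le
  have hc2 : 0 < Real.cos (((m : ℝ) + 1) * γ) := Real.cos_pos_of_mem_Ioo ⟨by linarith, h⟩
  have hmγ0 : (0:ℝ) ≤ (m : ℝ) * γ := mul_nonneg hm0 hγ0.le
  have hmγle : (m : ℝ) * γ ≤ ((m : ℝ) + 1) * γ := by nlinarith
  have hc1 : 0 < Real.cos ((m : ℝ) * γ) :=
    Real.cos_pos_of_mem_Ioo ⟨by linarith, by linarith⟩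
  have hc2le1 : Real.cos (((m : ℝ) + 1) * γ) ≤ Real.cos ((m : ℝ) * γ) :=
    Real.cos_le_cos_of_nonneg_of_le_pi hmγ0 (by linarith) hmγle
  have hsmle : Real.sin ((m : ℝ) * γ) ≤ Real.sin (((m : ℝ) + 1) * γ) :=
    Real.sin_le_sin_of_le_of_le_pi_div_two (by linarith) h.le hmγle
  have hsm0 : 0 ≤ Real.sin ((m : ℝ) * γ) :=
    Real.sin_nonneg_of_nonneg_of_le_pi hmγ0 (by linarith)
  have hNid : (L + b * Real.sin γ) ^ 2 * Real.cos ((m : ℝ) * γ) * Real.cos (((m : ℝ) + 1) * γ)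
      - L ^ 2 * Real.cos γ
      = -((L + b * Real.sin γ) ^ 2 * Real.sin (((m : ℝ) + 1) * γ) * Real.sin ((m : ℝ) * γ))
        + Real.cos γ * (b * Real.sin γ) * (2 * L + b * Real.sin γ) := by
    have hsub : (m : ℝ) * γ = ((m : ℝ) + 1) * γ - γ := by ring
    rw [hsub, Real.cos_sub, Real.sin_sub]
    linear_combination Real.cos γ * (L + b * Real.sin γ) ^ 2 *
      (Real.sin_sq_add_cos_sq (((m : ℝ) + 1) * γ))
  rw [casimir_rep L b hL hb m γ hγ0 h]
  exact bound_core L b ((m : ℝ) + 1) γ (Real.cos (((m : ℝ) + 1) * γ)) (Real.cos ((m : ℝ) * γ))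
    (Real.sin (((m : ℝ) + 1) * γ)) (Real.sin ((m : ℝ) * γ)) (Real.sin γ) (Real.cos γ)
    hL hb hγ0 hγ1 hM1 hs1 hs1γ hcγ hcγhalf hsM hjordan hc2 hc1 hc2le1
    (Real.cos_le_one _) hsmle hsm0 hNid
lemma casimir_ptlim (L b : ℝ) (hL : 0 < L) (hb : 0 < b) (m : ℕ) :
    Tendsto (fun γ : ℝ => casimirTerm L b (m + 1) γ) (𝓝[>] (0:ℝ))
      (𝓝 (-b / (16 * π ^ 2 * ((m : ℝ) + 1) ^ 4 * L ^ 3))) := by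
  have hπ := Real.pi_pos
  set M : ℝ := (m : ℝ) + 1 with hM
  have hM0 : 0 < M := by have := Nat.cast_nonneg (α := ℝ) m; rw [hM]; linarith
  set NN : ℝ → ℝ := fun γ => (L + b * Real.sin γ) ^ 2 * Real.cos ((m : ℝ) * γ) *
      Real.cos (M * γ) - L ^ 2 * Real.cos γ with hNN
  set DD : ℝ → ℝ := fun γ => L ^ 2 * Real.cos γ * (L + b * Real.sin γ) ^ 2 *
      Real.cos ((m : ℝ) * γ) * Real.cos (M * γ) with hDD
  have d3 : HasDerivAt NN (2 * L * b) 0 := by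
    have d1 : HasDerivAt (fun γ : ℝ => L + b * Real.sin γ) b 0 := by
      simpa using ((Real.hasDerivAt_sin 0).const_mul b).const_add L
    have d2 : HasDerivAt (fun γ : ℝ => (L + b * Real.sin γ) ^ 2) (2 * L * b) 0 := by
      have := d1.fun_pow 2
      norm_num at this
      simpa using this
    have dc : ∀ c : ℝ, HasDerivAt (fun γ : ℝ => Real.cos (c * γ)) 0 0 := by
      intro c
      have := ((hasDerivAt_id (0:ℝ)).const_mul c).cos
      simpa using this
    have h := ((d2.fun_mul (dc (m : ℝ))).fun_mul (dc M)).fun_sub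
      ((Real.hasDerivAt_cos 0).const_mul (L ^ 2))
    refine h.congr_deriv ?_
    simp
  have hNlim : Tendsto (fun γ => NN γ / γ) (𝓝[>] (0:ℝ)) (𝓝 (2 * L * b)) := by
    have h := hasDerivAt_iff_tendsto_slope.mp d3
    have h0 : NN 0 = 0 := by simp [hNN]
    have heq : slope NN 0 = fun γ => NN γ / γ := by
      funext x; rw [slope_def_field, h0]; simp
    rw [heq] at h
    exact h.mono_left (nhdsWithin_mono _ fun x hx => ne_of_gt hx)
  have tD : Tendsto DD (𝓝[>] (0:ℝ)) (𝓝 (L ^ 4)) := by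
    have hc : Continuous DD := by
      rw [hDD]; fun_prop
    have := hc.tendsto 0
    have h0 : DD 0 = L ^ 4 := by simp [hDD]; ring
    rw [h0] at this
    exact this.mono_left nhdsWithin_le_nhds
  have tcos : Tendsto (fun γ : ℝ => Real.cos (M * γ)) (𝓝[>] (0:ℝ)) (𝓝 1) := by
    have hc : Continuous fun γ : ℝ => Real.cos (M * γ) := by fun_prop
    have := hc.tendsto 0
    simp only [mul_zero, Real.cos_zero] at this
    exact this.mono_left nhdsWithin_le_nhds
  have tsin1 : Tendsto (fun γ : ℝ => Real.sin γ / γ) (𝓝[>] (0:ℝ)) (𝓝 1) :=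
    sin_div_self_tendsto'.mono_left (nhdsWithin_mono _ fun x hx => ne_of_gt hx)
  have hmap : Tendsto (fun γ : ℝ => M * γ) (𝓝[>] (0:ℝ)) (𝓝[≠] (0:ℝ)) := by
    apply tendsto_nhdsWithin_of_tendsto_nhds_of_eventually_within
    · have hc : Continuous fun γ : ℝ => M * γ := by fun_prop
      have := hc.tendsto 0
      simpa using this.mono_left nhdsWithin_le_nhds
    · filter_upwards [self_mem_nhdsWithin] with γ hγ
      exact ne_of_gt (mul_pos hM0 hγ)
  have tMinv : Tendsto (fun γ : ℝ => γ / Real.sin (M * γ)) (𝓝[>] (0:ℝ)) (𝓝 (1 / M)) := by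
    have h1 : Tendsto (fun γ : ℝ => (Real.sin (M * γ) / (M * γ))⁻¹) (𝓝[>] (0:ℝ)) (𝓝 1) := by
      have := (sin_div_self_tendsto'.comp hmap).inv₀ one_ne_zero
      simpa using this
    have h2 := h1.const_mul (1 / M)
    rw [mul_one] at h2
    apply h2.congr
    intro γ
    rw [inv_div, mul_div_assoc']
    congr 1
    field_simp
  have tfull : Tendsto (fun γ : ℝ =>
      -(Real.cos (M * γ) ^ 2 / (32 * π ^ 2)) * ((Real.sin γ / γ) ^ 3 *
        ((γ / Real.sin (M * γ)) ^ 4 * ((NN γ / γ) / DD γ))))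
      (𝓝[>] (0:ℝ))
      (𝓝 (-(1 ^ 2 / (32 * π ^ 2)) * (1 ^ 3 * ((1 / M) ^ 4 * ((2 * L * b) / L ^ 4))))) :=
    (((tcos.pow 2).div_const (32 * π ^ 2)).neg).mul
      ((tsin1.pow 3).mul ((tMinv.pow 4).mul (hNlim.div tD (by positivity))))
  have hval : (-(1 ^ 2 / (32 * π ^ 2)) * ((1:ℝ) ^ 3 * ((1 / M) ^ 4 * ((2 * L * b) / L ^ 4))))
      = -b / (16 * π ^ 2 * M ^ 4 * L ^ 3) := by
    field_simp
    ring
  rw [hval] at tfull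
  apply tfull.congr'
  have hMpos : (0:ℝ) < π / (2 * M) := by positivity
  filter_upwards [Ioo_mem_nhdsGT_of_mem (Set.left_mem_Ico.mpr hMpos)] with γ hγ
  obtain ⟨hγ0, hγlt⟩ := hγ
  rw [hNN, hDD]
  clear_value M NN DD
  subst hM
  have hm0 : (0:ℝ) ≤ (m : ℝ) := Nat.cast_nonneg m
  have hMγlt : ((m : ℝ) + 1) * γ < π / 2 := by
    have h := (mul_lt_mul_iff_right₀ hM0).mpr hγlt
    have he : ((m : ℝ) + 1) * (π / (2 * ((m : ℝ) + 1))) = π / 2 := by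
      field_simp
    linarith [he ▸ h]
  have hMγ : 0 < ((m : ℝ) + 1) * γ := mul_pos hM0 hγ0
  have hγ2 : γ < π / 2 := by nlinarith
  have hs1 : 0 < Real.sin γ := Real.sin_pos_of_pos_of_lt_pi hγ0 (by linarith)
  have hcγ : 0 < Real.cos γ := Real.cos_pos_of_mem_Ioo ⟨by linarith, hγ2⟩
  have hsM : 0 < Real.sin (((m : ℝ) + 1) * γ) :=
    Real.sin_pos_of_pos_of_lt_pi hMγ (by linarith)
  have hc2 : 0 < Real.cos (((m : ℝ) + 1) * γ) :=
    Real.cos_pos_of_mem_Ioo ⟨by linarith, hMγlt⟩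
  have hmγ0 : (0:ℝ) ≤ (m : ℝ) * γ := mul_nonneg hm0 hγ0.le
  have hmlt : (m : ℝ) * γ < π / 2 := by nlinarith
  have hc1 : 0 < Real.cos ((m : ℝ) * γ) := Real.cos_pos_of_mem_Ioo ⟨by linarith, hmlt⟩
  have hLb : 0 < L + b * Real.sin γ := by positivity
  rw [casimir_rep L b hL hb m γ hγ0 hMγlt]
  field_simp
/-- In the parallel-plate limit `γ → 0⁺`, the total even-bounce optical
Casimir energy `Σ_{m=1}^∞ E_m(γ)` (a finite sum for each `γ`) tends to
Casimir's parallel-plate energy `−π²b/(1440 L³)`. -/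
theorem casimir_parallel_plate_limit (L b : ℝ) (hL : 0 < L) (hb : 0 < b) :
    Filter.Tendsto (fun γ : ℝ => ∑' m : ℕ, casimirTerm L b (m + 1) γ)
      (𝓝[>] (0 : ℝ)) (𝓝 (-(π ^ 2 * b) / (1440 * L ^ 3))) := by
  have hπ := Real.pi_pos
  have hsum : Summable (fun m : ℕ =>
      (1 / (64 * L ^ 2) + b * (2 * L + b) * π ^ 2 / (512 * L ^ 4)) * (1 / ((m : ℝ) + 1) ^ 2)) := by
    apply Summable.mul_left
    have h2 : Summable (fun n : ℕ => 1 / (n : ℝ) ^ 2) :=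
      Real.summable_one_div_nat_pow.mpr (by norm_num)
    have := (summable_nat_add_iff 1).mpr h2
    apply this.congr
    intro n
    push_cast
    ring
  have hbound : ∀ᶠ γ in 𝓝[>] (0:ℝ), ∀ m : ℕ,
      ‖casimirTerm L b (m + 1) γ‖ ≤
        (1 / (64 * L ^ 2) + b * (2 * L + b) * π ^ 2 / (512 * L ^ 4)) *
          (1 / ((m : ℝ) + 1) ^ 2) := by
    filter_upwards [Ioc_mem_nhdsGT_of_mem (Set.left_mem_Ico.mpr one_pos)] with γ hγ m
    rw [Real.norm_eq_abs]
    exact casimir_bound L b hL hb γ hγ.1 hγ.2 m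
  have key := tendsto_tsum_of_dominated_convergence hsum
    (fun m => casimir_ptlim L b hL hb m) hbound
  have hg : HasSum (fun m : ℕ => -b / (16 * π ^ 2 * ((m : ℝ) + 1) ^ 4 * L ^ 3))
      (-b / (16 * π ^ 2 * L ^ 3) * (π ^ 4 / 90)) := by
    have h4' : HasSum (fun n : ℕ => (1:ℝ) / ((n : ℝ) + 1) ^ 4) (π ^ 4 / 90) := by
      have h0 : HasSum (fun n : ℕ => (1:ℝ) / (n : ℝ) ^ 4)
          (π ^ 4 / 90 + ∑ i ∈ Finset.range 1, (1:ℝ) / (i : ℝ) ^ 4) := by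
        simpa using hasSum_zeta_four
      have h := (hasSum_nat_add_iff 1).mpr h0
      have he : (fun n : ℕ => (1:ℝ) / ((n + 1 : ℕ) : ℝ) ^ 4)
          = fun n : ℕ => (1:ℝ) / ((n : ℝ) + 1) ^ 4 := by
        funext n; push_cast; ring
      rw [he] at h
      simpa using h
    have h := h4'.mul_left (-b / (16 * π ^ 2 * L ^ 3))
    have heq : (fun m : ℕ => -b / (16 * π ^ 2 * ((m : ℝ) + 1) ^ 4 * L ^ 3))
        = fun m : ℕ => (-b / (16 * π ^ 2 * L ^ 3)) * ((1:ℝ) / ((m : ℝ) + 1) ^ 4) := by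
      funext m
      rw [div_mul_div_comm, mul_one]
      congr 1
      ring
    rw [heq]
    exact h
  have hval : (-b / (16 * π ^ 2 * L ^ 3) * (π ^ 4 / 90)) = -(π ^ 2 * b) / (1440 * L ^ 3) := by
    field_simp
    ring
  rw [hg.tsum_eq, hval] at key
  exact key
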